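/- Assume k ≠ 0 and Ω ≠ 0. Then there exist 3 × 3 matrices E and F over ℂ[X] whose determinants are nonzero constant polynomials such that Â = E · diag(1, 1, Ĝ·L̂) · F; in other words, the diagonal matrix diag(1, 1, Ĝ·L̂) is a Smith form of the Fourier-transformed linearized Euler operator Â. -/
import Mathlib


open Polynomial Matrix Complex

/-- The transport symbol `Ĝ = ū·X + i·Ω` in `ℂ[X]`. -/
noncomputable def Ghat (ub Ω : ℝ) : Polynomial ℂ :=
  C (ub : ℂ) * X + C (Complex.I * (Ω : ℂ))

/-- The advective wave symbol `L̂ = Ĝ² + c̄²·(k² − X²)` in `ℂ[X]`. -/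
noncomputable def Lhat (ub cb k Ω : ℝ) : Polynomial ℂ :=
  Ghat ub Ω ^ 2 + C ((cb : ℂ) ^ 2) * (C ((k : ℂ) ^ 2) - X ^ 2)

/-- The Fourier-transformed linearized Euler operator as a `3 × 3` matrix over `ℂ[X]`. -/
noncomputable def eulerHat (ub cb rb k Ω : ℝ) : Matrix (Fin 3) (Fin 3) (Polynomial ℂ) :=
  !![Ghat ub Ω, C ((rb : ℂ) * (cb : ℂ) ^ 2) * X, C (Complex.I * (rb : ℂ) * (cb : ℂ) ^ 2 * (k : ℂ));
     C ((rb : ℂ)⁻¹) * X, Ghat ub Ω, 0;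
     C (Complex.I * (k : ℂ) / (rb : ℂ)), 0, Ghat ub Ω]

set_option maxHeartbeats 3200000 in
/-- For `k ≠ 0` and `Ω ≠ 0` (subsonic flow), the diagonal matrix `diag(1, 1, Ĝ·L̂)` is a
Smith form of the Fourier-transformed linearized Euler operator `Â`: there exist matrices
`E`, `F` over `ℂ[X]` with nonzero constant determinants such that
`Â = E · diag(1, 1, Ĝ·L̂) · F`. -/
theorem euler_smith_form (ub vb cb rb ω k : ℝ)
    (hc : 0 < cb) (hr : 0 < rb) (hsub : ub ^ 2 < cb ^ 2)
    (hk : k ≠ 0) (hΩ : ω + k * vb ≠ 0) :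
    ∃ E F : Matrix (Fin 3) (Fin 3) (Polynomial ℂ),
      (∃ e : ℂ, e ≠ 0 ∧ E.det = C e) ∧
      (∃ f : ℂ, f ≠ 0 ∧ F.det = C f) ∧
      eulerHat ub cb rb k (ω + k * vb) =
        E * Matrix.diagonal ![1, 1, Ghat ub (ω + k * vb) * Lhat ub cb k (ω + k * vb)] * F := by
  have hkC : (k : ℂ) ≠ 0 := by exact_mod_cast hk
  have hWC : ((ω + k * vb : ℝ) : ℂ) ≠ 0 := by exact_mod_cast hΩ
  have hcC : (cb : ℂ) ≠ 0 := by exact_mod_cast hc.ne'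
  have hrC : (rb : ℂ) ≠ 0 := by exact_mod_cast hr.ne'
  have hWC' : (ω : ℂ) + (k : ℂ) * (vb : ℂ) ≠ 0 := by push_cast at hWC; exact hWC
  have hI3 : Complex.I ^ 3 = -Complex.I := by
    rw [pow_succ, Complex.I_sq]; ring
  have hI4 : Complex.I ^ 4 = 1 := by
    rw [show (4:ℕ) = 2*2 from rfl, pow_mul, Complex.I_sq]; norm_num
  refine ⟨!![Ghat ub (ω + k * vb), C ((rb : ℂ) * (cb : ℂ) ^ 2) * X,
             C ((rb : ℂ) / ((k : ℂ) * ((ω + k * vb : ℝ) : ℂ)));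
             C ((rb : ℂ)⁻¹) * X, Ghat ub (ω + k * vb),
             C ((ub : ℂ) / ((cb : ℂ) ^ 2 * (k : ℂ) * ((ω + k * vb : ℝ) : ℂ)));
             C (Complex.I * (k : ℂ) / (rb : ℂ)), 0, 0],
          !![1, 0, C (-Complex.I * (rb : ℂ) / (k : ℂ)) * Ghat ub (ω + k * vb);
             0, 1, C ((((ω + k * vb : ℝ) : ℂ) * (k : ℂ))⁻¹) *
               (C (Complex.I * ((ω + k * vb : ℝ) : ℂ)) * X -
                C ((ub : ℂ) / (cb : ℂ) ^ 2) * Lhat ub cb k (ω + k * vb));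
             0, 0, 1],
          ⟨1, one_ne_zero, ?_⟩, ⟨1, one_ne_zero, ?_⟩, ?_⟩
  · apply Polynomial.funext; intro x
    simp only [Matrix.det_fin_three, Ghat, Lhat, Matrix.cons_val', Matrix.cons_val_zero,
      Matrix.cons_val_one, Matrix.head_cons, Matrix.empty_val', Matrix.cons_val_fin_one,
      Matrix.head_fin_const, Matrix.cons_val_two, Matrix.tail_cons, Matrix.of_apply,
      Matrix.vecHead, Matrix.vecTail, Function.comp, Matrix.cons_val_succ, Fin.succ_zero_eq_one, Fin.succ_one_eq_two,
      eval_add, eval_mul, eval_sub, eval_C, eval_X, eval_zero, eval_one, eval_pow,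
      mul_zero, zero_mul, sub_zero, zero_sub, add_zero, zero_add, mul_one, one_mul]
    have hWC2 := hWC
    generalize hg : ((ω + k * vb : ℝ) : ℂ) = W
    rw [hg] at hWC2
    field_simp [hkC, hcC, hrC, hWC2]
    ring_nf
    simp only [Complex.I_sq, hI3, hI4]
    try field_simp [hkC, hcC, hrC, hWC2]
    try ring
  · apply Polynomial.funext; intro x
    simp only [Matrix.det_fin_three, Ghat, Lhat, Matrix.cons_val', Matrix.cons_val_zero,
      Matrix.cons_val_one, Matrix.head_cons, Matrix.empty_val', Matrix.cons_val_fin_one,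
      Matrix.head_fin_const, Matrix.cons_val_two, Matrix.tail_cons, Matrix.of_apply,
      Matrix.vecHead, Matrix.vecTail, Function.comp, Matrix.cons_val_succ, Fin.succ_zero_eq_one, Fin.succ_one_eq_two,
      eval_add, eval_mul, eval_sub, eval_C, eval_X, eval_zero, eval_one, eval_pow,
      mul_zero, zero_mul, sub_zero, zero_sub, add_zero, zero_add, mul_one, one_mul]
  · have hD : (Matrix.diagonal ![1, 1, Ghat ub (ω + k * vb) * Lhat ub cb k (ω + k * vb)] :
        Matrix (Fin 3) (Fin 3) (Polynomial ℂ)) =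
        !![1,0,0;0,1,0;0,0,Ghat ub (ω + k * vb) * Lhat ub cb k (ω + k * vb)] := by
      refine Matrix.ext fun i j => ?_
      fin_cases i <;> fin_cases j <;> simp [Matrix.diagonal, Matrix.vecHead, Matrix.vecTail]
    rw [hD]
    refine Matrix.ext fun i j => ?_
    fin_cases i <;> fin_cases j <;>
      · apply Polynomial.funext; intro x
        simp only [eulerHat, Ghat, Lhat, Matrix.mul_apply, Fin.sum_univ_three, Fin.zero_eta,
          Fin.mk_one, show (⟨2, by norm_num⟩ : Fin 3) = 2 from rfl, Fin.isValue,
          Matrix.cons_val', Matrix.cons_val_zero, Matrix.cons_val_one,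
          Matrix.head_cons, Matrix.empty_val', Matrix.cons_val_fin_one, Matrix.head_fin_const,
          Matrix.cons_val_two, Matrix.tail_cons, Matrix.of_apply,
          Matrix.vecHead, Matrix.vecTail, Function.comp, Matrix.cons_val_succ, Fin.succ_zero_eq_one, Fin.succ_one_eq_two,
          eval_add, eval_mul, eval_sub, eval_C, eval_X, eval_zero, eval_one, eval_pow,
          mul_zero, zero_mul, sub_zero, zero_sub, add_zero, zero_add, mul_one, one_mul]
        try (have hWC2 := hWC
             generalize hg : ((ω + k * vb : ℝ) : ℂ) = W
             rw [hg] at hWC2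
             field_simp [hkC, hcC, hrC, hWC2]
             try ring_nf
             try simp only [Complex.I_sq, hI3, hI4]
             try ring
             try (field_simp [hkC, hcC, hrC, hWC2]
                  try ring_nf
                  try simp only [Complex.I_sq, hI3, hI4]
                  try ring))
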